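/- Let X_1,…,X_n be an ergodic finite-state Markov chain with transition matrix p, invariant distribution μ, and initial distribution ρ; let P_n be its path law and Q_n the path law of the Markov chain with transition matrix q and the same initial distribution ρ, where q(x,y) > 0 whenever p(x,y) > 0. Then the normalized relative entropy converges: (1/n) D(P_n‖Q_n) → Σ_{x,y} μ(x) p(x,y) log(p(x,y)/q(x,y)) as n → ∞. -/

import Mathlib

open Filter Topology Finset

set_option linter.unusedSectionVars false

section MREAux

variable {Ω : Type*} [Fintype Ω] [DecidableEq Ω]

/-- Path weight of a Markov chain. -/
def mreWeight (p : Matrix Ω Ω ℝ) (ρ : Ω → ℝ) (n : ℕ) (x : Fin (n + 1) → Ω) : ℝ :=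
  ρ (x 0) * ∏ i : Fin n, p (x i.castSucc) (x i.succ)

/-- Marginal at time `n`. -/
def mreNu (p : Matrix Ω Ω ℝ) (ρ : Ω → ℝ) (n : ℕ) (a : Ω) : ℝ :=
  ∑ x0, ρ x0 * (p ^ n) x0 a

lemma mreNu_zero (p : Matrix Ω Ω ℝ) (ρ : Ω → ℝ) (a : Ω) : mreNu p ρ 0 a = ρ a := by
  simp [mreNu, Matrix.one_apply]

lemma mreNu_add (p : Matrix Ω Ω ℝ) (ρ : Ω → ℝ) (n k : ℕ) (b : Ω) :
    mreNu p ρ (n + k) b = ∑ a, mreNu p ρ n a * (p ^ k) a b := by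
  unfold mreNu
  simp only [pow_add, Matrix.mul_apply, Finset.mul_sum, Finset.sum_mul]
  rw [Finset.sum_comm]
  simp [mul_assoc]

lemma mreNu_succ (p : Matrix Ω Ω ℝ) (ρ : Ω → ℝ) (n : ℕ) (b : Ω) :
    mreNu p ρ (n + 1) b = ∑ a, mreNu p ρ n a * p a b := by
  rw [mreNu_add]; simp [pow_one]

lemma mre_sum_snoc {n : ℕ} (f : (Fin (n + 2) → Ω) → ℝ) :
    ∑ x : Fin (n + 2) → Ω, f x = ∑ y : Fin (n + 1) → Ω, ∑ b, f (Fin.snoc y b) := by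
  rw [← (Fin.snocEquiv (fun _ : Fin (n + 2) => Ω)).sum_comp f, Fintype.sum_prod_type]
  rw [Finset.sum_comm]
  rfl

lemma mreWeight_snoc (p : Matrix Ω Ω ℝ) (ρ : Ω → ℝ) (n : ℕ) (y : Fin (n + 1) → Ω) (b : Ω) :
    mreWeight p ρ (n + 1) (Fin.snoc y b) = mreWeight p ρ n y * p (y (Fin.last n)) b := by
  unfold mreWeight
  rw [Fin.prod_univ_castSucc]
  have h0 : (Fin.snoc y b : Fin (n + 2) → Ω) 0 = y 0 := by
    rw [show (0 : Fin (n + 2)) = Fin.castSucc 0 by rfl, Fin.snoc_castSucc]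
  have hstep : ∀ i : Fin n,
      p ((Fin.snoc y b : Fin (n+2) → Ω) i.castSucc.castSucc)
        ((Fin.snoc y b : Fin (n+2) → Ω) i.castSucc.succ) = p (y i.castSucc) (y i.succ) := by
    intro i
    rw [Fin.snoc_castSucc, Fin.succ_castSucc, Fin.snoc_castSucc]
  have hlast : p ((Fin.snoc y b : Fin (n+2) → Ω) (Fin.last n).castSucc)
      ((Fin.snoc y b : Fin (n+2) → Ω) (Fin.last n).succ) = p (y (Fin.last n)) b := by
    rw [Fin.snoc_castSucc, Fin.succ_last, Fin.snoc_last]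
  rw [h0, hlast, Finset.prod_congr rfl (fun i _ => hstep i)]
  ring

/-- Marginal of a function of the last coordinate. -/
lemma mre_last_marginal (p : Matrix Ω Ω ℝ) (ρ : Ω → ℝ) :
    ∀ (n : ℕ) (h : Ω → ℝ),
      ∑ x : Fin (n + 1) → Ω, mreWeight p ρ n x * h (x (Fin.last n)) = ∑ a, mreNu p ρ n a * h a := by
  intro n
  induction n with
  | zero =>
    intro h
    rw [← (Equiv.funUnique (Fin 1) Ω).symm.sum_comp]
    simp [mreWeight, mreNu_zero, Equiv.funUnique]
  | succ n ih =>
    intro h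
    rw [mre_sum_snoc]
    have : ∀ y : Fin (n+1) → Ω, ∑ b, mreWeight p ρ (n+1) (Fin.snoc y b) *
        h ((Fin.snoc y b : Fin (n+2) → Ω) (Fin.last (n+1))) =
        mreWeight p ρ n y * ∑ b, p (y (Fin.last n)) b * h b := by
      intro y
      rw [Finset.mul_sum]
      refine Finset.sum_congr rfl fun b _ => ?_
      rw [mreWeight_snoc, Fin.snoc_last]
      ring
    rw [Finset.sum_congr rfl fun y _ => this y,
      ih (fun a => ∑ b, p a b * h b)]
    simp only [Finset.mul_sum]
    rw [Finset.sum_comm]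
    refine Finset.sum_congr rfl fun b _ => ?_
    rw [mreNu_succ, Finset.sum_mul]
    exact Finset.sum_congr rfl fun a _ => by ring


/-- Marginal of a sum over pairs of consecutive coordinates. -/
lemma mre_pair_marginal (p : Matrix Ω Ω ℝ) (ρ : Ω → ℝ) (hp1 : ∀ x, ∑ y, p x y = 1)
    (g : Ω → Ω → ℝ) :
    ∀ n : ℕ, ∑ x : Fin (n + 1) → Ω,
        mreWeight p ρ n x * ∑ i : Fin n, g (x i.castSucc) (x i.succ)
      = ∑ i ∈ Finset.range n, ∑ a, ∑ b, mreNu p ρ i a * p a b * g a b := by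
  intro n
  induction n with
  | zero => simp
  | succ n ih =>
    rw [mre_sum_snoc]
    have key : ∀ (y : Fin (n+1) → Ω) (b : Ω),
        mreWeight p ρ (n+1) (Fin.snoc y b) *
          ∑ i : Fin (n+1), g ((Fin.snoc y b : Fin (n+2) → Ω) i.castSucc)
            ((Fin.snoc y b : Fin (n+2) → Ω) i.succ)
        = mreWeight p ρ n y * p (y (Fin.last n)) b *
          ((∑ i : Fin n, g (y i.castSucc) (y i.succ)) + g (y (Fin.last n)) b) := by
      intro y b
      rw [mreWeight_snoc]
      congr 1
      rw [Fin.sum_univ_castSucc]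
      congr 1
      · refine Finset.sum_congr rfl fun i _ => ?_
        rw [Fin.snoc_castSucc, Fin.succ_castSucc, Fin.snoc_castSucc]
      · rw [Fin.snoc_castSucc, Fin.succ_last, Fin.snoc_last]
    have split : ∀ y : Fin (n+1) → Ω,
        ∑ b, mreWeight p ρ (n+1) (Fin.snoc y b) *
          ∑ i : Fin (n+1), g ((Fin.snoc y b : Fin (n+2) → Ω) i.castSucc)
            ((Fin.snoc y b : Fin (n+2) → Ω) i.succ)
        = mreWeight p ρ n y * ∑ i : Fin n, g (y i.castSucc) (y i.succ)
          + mreWeight p ρ n y * ∑ b, p (y (Fin.last n)) b * g (y (Fin.last n)) b := by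
      intro y
      rw [Finset.sum_congr rfl fun b _ => key y b]
      have : ∑ b, mreWeight p ρ n y * p (y (Fin.last n)) b *
          ((∑ i : Fin n, g (y i.castSucc) (y i.succ)) + g (y (Fin.last n)) b)
          = (mreWeight p ρ n y * (∑ i : Fin n, g (y i.castSucc) (y i.succ))) *
              (∑ b, p (y (Fin.last n)) b)
            + mreWeight p ρ n y * ∑ b, p (y (Fin.last n)) b * g (y (Fin.last n)) b := by
        have e1 : ∀ b, mreWeight p ρ n y * p (y (Fin.last n)) b *
            ((∑ i : Fin n, g (y i.castSucc) (y i.succ)) + g (y (Fin.last n)) b)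
            = mreWeight p ρ n y * (∑ i : Fin n, g (y i.castSucc) (y i.succ)) *
                p (y (Fin.last n)) b
              + mreWeight p ρ n y * (p (y (Fin.last n)) b * g (y (Fin.last n)) b) :=
          fun b => by ring
        rw [Finset.sum_congr rfl fun b _ => e1 b, Finset.sum_add_distrib,
          ← Finset.mul_sum, ← Finset.mul_sum]
      rw [this, hp1, mul_one]
    rw [Finset.sum_congr rfl fun y _ => split y, Finset.sum_add_distrib,
      mre_last_marginal p ρ n (fun a => ∑ b, p a b * g a b), ih,
      Finset.sum_range_succ]
    congr 1
    refine Finset.sum_congr rfl fun a _ => ?_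
    rw [Finset.mul_sum]
    exact Finset.sum_congr rfl fun b _ => by ring

/-- Pathwise splitting of the log-likelihood ratio. -/
lemma mre_log_split (p q : Matrix Ω Ω ℝ) (ρ : Ω → ℝ)
    (hρ0 : ∀ x, 0 ≤ ρ x) (hp0 : ∀ x y, 0 ≤ p x y)
    (hpq : ∀ x y, 0 < p x y → 0 < q x y) (n : ℕ) (x : Fin (n + 1) → Ω) :
    mreWeight p ρ n x * Real.log (mreWeight p ρ n x / mreWeight q ρ n x)
      = mreWeight p ρ n x *
        ∑ i : Fin n, Real.log (p (x i.castSucc) (x i.succ) / q (x i.castSucc) (x i.succ)) := by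
  rcases eq_or_ne (mreWeight p ρ n x) 0 with h0 | h0
  · rw [h0, zero_mul, zero_mul]
  · have hρne : ρ (x 0) ≠ 0 := fun h => h0 (by simp [mreWeight, h])
    have hprodne : ∏ i : Fin n, p (x i.castSucc) (x i.succ) ≠ 0 :=
      fun h => h0 (by simp [mreWeight, h])
    have hfac : ∀ i : Fin n, 0 < p (x i.castSucc) (x i.succ) := by
      intro i
      refine lt_of_le_of_ne (hp0 _ _) fun h => hprodne ?_
      exact Finset.prod_eq_zero (Finset.mem_univ i) h.symm
    have hqfac : ∀ i : Fin n, 0 < q (x i.castSucc) (x i.succ) := fun i => hpq _ _ (hfac i)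
    congr 1
    unfold mreWeight
    rw [mul_div_mul_left _ _ hρne, ← Finset.prod_div_distrib,
      Real.log_prod (fun i _ => div_ne_zero (hfac i).ne' (hqfac i).ne')]


lemma mre_pow_row_sum (p : Matrix Ω Ω ℝ) (hp1 : ∀ x, ∑ y, p x y = 1) :
    ∀ (n : ℕ) (x : Ω), ∑ y, (p ^ n) x y = 1 := by
  intro n
  induction n with
  | zero => intro x; simp [Matrix.one_apply]
  | succ n ih =>
    intro x
    simp only [pow_succ, Matrix.mul_apply]
    rw [Finset.sum_comm]
    have : ∀ z, ∑ y, (p ^ n) x z * p z y = (p ^ n) x z := by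
      intro z; rw [← Finset.mul_sum, hp1, mul_one]
    rw [Finset.sum_congr rfl fun z _ => this z, ih]

lemma mreNu_mass (p : Matrix Ω Ω ℝ) (ρ : Ω → ℝ) (hρ1 : ∑ x, ρ x = 1)
    (hp1 : ∀ x, ∑ y, p x y = 1) (n : ℕ) : ∑ a, mreNu p ρ n a = 1 := by
  unfold mreNu
  rw [Finset.sum_comm]
  have : ∀ x0, ∑ a, ρ x0 * (p ^ n) x0 a = ρ x0 := by
    intro x0; rw [← Finset.mul_sum, mre_pow_row_sum p hp1, mul_one]
  rw [Finset.sum_congr rfl fun x0 _ => this x0, hρ1]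

lemma mre_inv_pow (p : Matrix Ω Ω ℝ) (μ : Ω → ℝ) (hinv : ∀ y, ∑ x, μ x * p x y = μ y) :
    ∀ (k : ℕ) (y : Ω), ∑ x, μ x * (p ^ k) x y = μ y := by
  intro k
  induction k with
  | zero => intro y; simp [Matrix.one_apply]
  | succ k ih =>
    intro y
    simp only [pow_succ, Matrix.mul_apply, Finset.mul_sum]
    rw [Finset.sum_comm]
    have : ∀ z, ∑ x, μ x * ((p ^ k) x z * p z y) = μ z * p z y := by
      intro z
      calc ∑ x, μ x * ((p ^ k) x z * p z y)
          = (∑ x, μ x * (p ^ k) x z) * p z y := by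
            rw [Finset.sum_mul]; exact Finset.sum_congr rfl fun x _ => by ring
        _ = μ z * p z y := by rw [ih z]
    rw [Finset.sum_congr rfl fun z _ => this z, hinv]

/-- General total-variation contraction step. -/
lemma mre_tv_step (p : Matrix Ω Ω ℝ) (ρ μ : Ω → ℝ) (hρ1 : ∑ x, ρ x = 1)
    (hμ1 : ∑ x, μ x = 1) (hp1 : ∀ x, ∑ y, p x y = 1)
    (hinv : ∀ y, ∑ x, μ x * p x y = μ y)
    (k : ℕ) (δ : Ω → ℝ) (hδ : ∀ x y, δ y ≤ (p ^ k) x y) (n : ℕ) :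
    ∑ y, |mreNu p ρ (n + k) y - μ y| ≤ (1 - ∑ y, δ y) * ∑ x, |mreNu p ρ n x - μ x| := by
  have e : ∀ y, mreNu p ρ (n + k) y - μ y
      = ∑ x, (mreNu p ρ n x - μ x) * ((p ^ k) x y - δ y) := by
    intro y
    rw [mreNu_add, ← mre_inv_pow p μ hinv k y]
    simp only [sub_mul, mul_sub, Finset.sum_sub_distrib]
    rw [← Finset.sum_mul, ← Finset.sum_mul, mreNu_mass p ρ hρ1 hp1, hμ1]
    ring
  calc ∑ y, |mreNu p ρ (n + k) y - μ y|
      ≤ ∑ y, ∑ x, |mreNu p ρ n x - μ x| * ((p ^ k) x y - δ y) := by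
        refine Finset.sum_le_sum fun y _ => ?_
        rw [e y]
        refine (Finset.abs_sum_le_sum_abs _ _).trans (Finset.sum_le_sum fun x _ => ?_)
        rw [abs_mul, abs_of_nonneg (sub_nonneg.2 (hδ x y))]
    _ = ∑ x, |mreNu p ρ n x - μ x| * (1 - ∑ y, δ y) := by
        rw [Finset.sum_comm]
        refine Finset.sum_congr rfl fun x _ => ?_
        rw [← Finset.mul_sum]
        congr 1
        rw [Finset.sum_sub_distrib, mre_pow_row_sum p hp1]
    _ = (1 - ∑ y, δ y) * ∑ x, |mreNu p ρ n x - μ x| := by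
        rw [← Finset.sum_mul, mul_comm]


lemma mre_nu_tendsto [Nonempty Ω] (p : Matrix Ω Ω ℝ) (ρ μ : Ω → ℝ)
    (hρ1 : ∑ x, ρ x = 1) (hμ1 : ∑ x, μ x = 1)
    (hp0 : ∀ x y, 0 ≤ p x y) (hp1 : ∀ x, ∑ y, p x y = 1)
    (hinv : ∀ y, ∑ x, μ x * p x y = μ y)
    (hergodic : ∃ k : ℕ, ∀ x y, 0 < (p ^ k) x y) (a : Ω) :
    Tendsto (fun n => mreNu p ρ n a) atTop (𝓝 (μ a)) := by
  obtain ⟨k, hk⟩ := hergodic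
  -- positivity of p ^ (k + 1)
  have hpow0 : ∀ (m : ℕ) (x y : Ω), 0 ≤ (p ^ m) x y := by
    intro m
    induction m with
    | zero => intro x y; rw [pow_zero]; by_cases h : x = y <;> simp [Matrix.one_apply, h]
    | succ m ih =>
      intro x y
      rw [pow_succ, Matrix.mul_apply]
      exact Finset.sum_nonneg fun z _ => mul_nonneg (ih x z) (hp0 z y)
  have hk1 : ∀ x y, 0 < (p ^ (k + 1)) x y := by
    intro x y
    have hz : ∃ z, 0 < p x z := by
      by_contra h
      push_neg at h
      have hz0 : ∀ z, p x z = 0 := fun z => le_antisymm (h z) (hp0 x z)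
      have := hp1 x
      simp [hz0] at this
    obtain ⟨z0, hz0⟩ := hz
    rw [pow_succ', Matrix.mul_apply]
    refine Finset.sum_pos' (fun z _ => mul_nonneg (hp0 x z) (hpow0 k z y)) ?_
    exact ⟨z0, Finset.mem_univ z0, mul_pos hz0 (hk z0 y)⟩
  set k1 := k + 1 with hk1def
  set δ : Ω → ℝ := fun y => Finset.univ.inf' Finset.univ_nonempty (fun x => (p ^ k1) x y)
    with hδdef
  have hδle : ∀ x y, δ y ≤ (p ^ k1) x y := fun x y =>
    Finset.inf'_le _ (Finset.mem_univ x)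
  have hδpos : ∀ y, 0 < δ y := fun y =>
    (Finset.lt_inf'_iff _).2 fun x _ => hk1 x y
  set c : ℝ := ∑ y, δ y with hcdef
  have hcpos : 0 < c := Finset.sum_pos (fun y _ => hδpos y) Finset.univ_nonempty
  have hcle : c ≤ 1 := by
    obtain ⟨x0⟩ := ‹Nonempty Ω›
    calc c ≤ ∑ y, (p ^ k1) x0 y := Finset.sum_le_sum fun y _ => hδle x0 y
      _ = 1 := mre_pow_row_sum p hp1 k1 x0
  set d : ℕ → ℝ := fun n => ∑ x, |mreNu p ρ n x - μ x| with hddef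
  have hd0 : ∀ n, 0 ≤ d n := fun n => Finset.sum_nonneg fun x _ => abs_nonneg _
  have hmono : Antitone d := by
    refine antitone_nat_of_succ_le fun n => ?_
    have := mre_tv_step p ρ μ hρ1 hμ1 hp1 hinv 1 (fun _ => 0)
      (fun x y => by simpa using hp0 x y) n
    simpa using this
  have hcontr : ∀ n, d (n + k1) ≤ (1 - c) * d n :=
    mre_tv_step p ρ μ hρ1 hμ1 hp1 hinv k1 δ hδle
  have hgeom : ∀ m, d (m * k1) ≤ (1 - c) ^ m * d 0 := by
    intro m
    induction m with
    | zero => simp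
    | succ m ih =>
      have : d ((m + 1) * k1) = d (m * k1 + k1) := by ring_nf
      rw [this, pow_succ]
      calc d (m * k1 + k1) ≤ (1 - c) * d (m * k1) := hcontr (m * k1)
        _ ≤ (1 - c) * ((1 - c) ^ m * d 0) := by
            refine mul_le_mul_of_nonneg_left ih (by linarith)
        _ = (1 - c) ^ m * (1 - c) * d 0 := by ring
  have hdiv : Tendsto (fun n : ℕ => n / k1) atTop atTop :=
    Filter.tendsto_atTop_atTop.2 fun b =>
      ⟨b * k1, fun n hn => (Nat.le_div_iff_mul_le (Nat.succ_pos k)).2 hn⟩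
  have hgeo0 : Tendsto (fun n : ℕ => (1 - c) ^ (n / k1) * d 0) atTop (𝓝 0) := by
    have h1 : Tendsto (fun m : ℕ => (1 - c) ^ m) atTop (𝓝 0) :=
      tendsto_pow_atTop_nhds_zero_of_lt_one (by linarith) (by linarith)
    simpa using (h1.comp hdiv).mul_const (d 0)
  have hdlim : Tendsto d atTop (𝓝 0) := by
    refine squeeze_zero hd0 (fun n => ?_) hgeo0
    calc d n ≤ d (n / k1 * k1) := hmono (Nat.div_mul_le_self n k1)
      _ ≤ (1 - c) ^ (n / k1) * d 0 := hgeom (n / k1)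
  have habs : Tendsto (fun n => mreNu p ρ n a - μ a) atTop (𝓝 0) := by
    refine squeeze_zero_norm (fun n => ?_) hdlim
    rw [Real.norm_eq_abs]
    exact Finset.single_le_sum (f := fun x => |mreNu p ρ n x - μ x|)
      (fun x _ => abs_nonneg _) (Finset.mem_univ a)
  simpa using habs.add_const (μ a)

end MREAux

/-- Relative entropy rate of Markov chains: for an ergodic finite-state Markov chain with
transition matrix `p`, invariant distribution `μ` and initial distribution `ρ`, and a second
chain with transition matrix `q` (with `q > 0` wherever `p > 0`) and the same initial
distribution, the normalized relative entropy of the path measures converges to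
`Σ_{x,y} μ(x) p(x,y) log(p(x,y)/q(x,y))`. -/
theorem markov_relative_entropy_rate
    {Ω : Type*} [Fintype Ω] [DecidableEq Ω] [Nonempty Ω]
    (p q : Matrix Ω Ω ℝ) (ρ μ : Ω → ℝ)
    (hρ0 : ∀ x, 0 ≤ ρ x) (hρ1 : ∑ x, ρ x = 1)
    (hμ0 : ∀ x, 0 ≤ μ x) (hμ1 : ∑ x, μ x = 1)
    (hp0 : ∀ x y, 0 ≤ p x y) (hp1 : ∀ x, ∑ y, p x y = 1)
    (hq0 : ∀ x y, 0 ≤ q x y) (hq1 : ∀ x, ∑ y, q x y = 1)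
    (hinv : ∀ y, ∑ x, μ x * p x y = μ y)
    (hergodic : ∃ k : ℕ, ∀ x y, 0 < (p ^ k) x y)
    (hpq : ∀ x y, 0 < p x y → 0 < q x y) :
    Tendsto (fun n : ℕ =>
      ((1 : ℝ) / n) * ∑ x : Fin (n + 1) → Ω,
        (ρ (x 0) * ∏ i : Fin n, p (x i.castSucc) (x i.succ)) *
          Real.log ((ρ (x 0) * ∏ i : Fin n, p (x i.castSucc) (x i.succ)) /
            (ρ (x 0) * ∏ i : Fin n, q (x i.castSucc) (x i.succ))))
      atTop (𝓝 (∑ x, ∑ y, μ x * p x y * Real.log (p x y / q x y))) := by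
  set F : ℕ → ℝ := fun m => ∑ a, ∑ b, mreNu p ρ m a * p a b * Real.log (p a b / q a b) with hF
  have hFlim : Tendsto F atTop (𝓝 (∑ x, ∑ y, μ x * p x y * Real.log (p x y / q x y))) := by
    refine tendsto_finset_sum _ fun a _ => tendsto_finset_sum _ fun b _ => ?_
    have := ((mre_nu_tendsto p ρ μ hρ1 hμ1 hp0 hp1 hinv hergodic a).mul_const
      (p a b * Real.log (p a b / q a b)))
    simpa [mul_assoc] using this
  have identity : ∀ n : ℕ,
      (∑ x : Fin (n + 1) → Ω,
        (ρ (x 0) * ∏ i : Fin n, p (x i.castSucc) (x i.succ)) *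
          Real.log ((ρ (x 0) * ∏ i : Fin n, p (x i.castSucc) (x i.succ)) /
            (ρ (x 0) * ∏ i : Fin n, q (x i.castSucc) (x i.succ))))
      = ∑ i ∈ Finset.range n, F i := by
    intro n
    have e1 : ∀ x : Fin (n + 1) → Ω,
        (ρ (x 0) * ∏ i : Fin n, p (x i.castSucc) (x i.succ)) *
          Real.log ((ρ (x 0) * ∏ i : Fin n, p (x i.castSucc) (x i.succ)) /
            (ρ (x 0) * ∏ i : Fin n, q (x i.castSucc) (x i.succ)))
        = mreWeight p ρ n x *
          ∑ i : Fin n, Real.log (p (x i.castSucc) (x i.succ) / q (x i.castSucc) (x i.succ)) :=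
      fun x => mre_log_split p q ρ hρ0 hp0 hpq n x
    rw [Finset.sum_congr rfl fun x _ => e1 x]
    exact mre_pair_marginal p ρ hp1 (fun a b => Real.log (p a b / q a b)) n
  have := hFlim.cesaro
  refine this.congr fun n => ?_
  rw [identity n, one_div]
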